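/- In the diagonalization setting, fix an index i and a point α ∈ ℂ, and suppose the diagonal entry d_i has a zero of order s ≥ 1 at α (ord_α(d_i) = s). Then: (1) T_i(α) ≠ 0 (the evaluation of the i-th column of T at α is a nonzero vector); (2) Q.mulVec T_i = d_i • Ŝ_i as vectors over RatFunc ℂ; (3) every nonzero component of the vector Q.mulVec T_i has ord_α ≥ s; and (4) at least one component of Q.mulVec T_i has ord_α exactly equal to s. Thus T_i is a root function of Q at α of exact order s. -/

import Mathlib

set_option synthInstance.maxHeartbeats 1000000
set_option maxHeartbeats 1000000

/-- `HasOrdAt α r k` : the rational function `r` has order `k ∈ ℤ` at `α`, i.e.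
`r = (X − α)^k · (p/q)` with `p(α) ≠ 0` and `q(α) ≠ 0`. -/
def HasOrdAt (α : ℂ) (r : RatFunc ℂ) (k : ℤ) : Prop :=
  ∃ p q : Polynomial ℂ, Polynomial.eval α p ≠ 0 ∧ Polynomial.eval α q ≠ 0 ∧
    r = (RatFunc.X - RatFunc.C α) ^ k *
      (algebraMap (Polynomial ℂ) (RatFunc ℂ) p / algebraMap (Polynomial ℂ) (RatFunc ℂ) q)

/-- Entrywise embedding of a polynomial matrix into matrices over `RatFunc ℂ`. -/
noncomputable def matRF {n : ℕ} (M : Matrix (Fin n) (Fin n) (Polynomial ℂ)) :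
    Matrix (Fin n) (Fin n) (RatFunc ℂ) :=
  M.map (algebraMap (Polynomial ℂ) (RatFunc ℂ))

/-- The `i`-th column of a polynomial matrix, regarded over `RatFunc ℂ`. -/
noncomputable def colRF {n : ℕ} (M : Matrix (Fin n) (Fin n) (Polynomial ℂ)) (i : Fin n) :
    Fin n → RatFunc ℂ :=
  fun k => algebraMap (Polynomial ℂ) (RatFunc ℂ) (M k i)

/-- The `i`-th column of a polynomial matrix evaluated (entrywise) at `α`. -/
def evalCol {n : ℕ} (M : Matrix (Fin n) (Fin n) (Polynomial ℂ)) (i : Fin n) (α : ℂ) :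
    Fin n → ℂ :=
  fun k => Polynomial.eval α (M k i)

lemma XC_eq (α : ℂ) : (RatFunc.X - RatFunc.C α : RatFunc ℂ)
    = algebraMap (Polynomial ℂ) (RatFunc ℂ) (Polynomial.X - Polynomial.C α) := by
  simp [map_sub, RatFunc.algebraMap_X, RatFunc.algebraMap_C]

lemma XC_ne (α : ℂ) : (RatFunc.X - RatFunc.C α : RatFunc ℂ) ≠ 0 := by
  rw [XC_eq]
  exact RatFunc.algebraMap_ne_zero (Polynomial.X_sub_C_ne_zero α)

/-- Multiplying a rational function of known order by a nonzero polynomial adds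
the polynomial's root multiplicity to the order. -/
lemma HasOrdAt.mul_poly {α : ℂ} {r : RatFunc ℂ} {k : ℤ} (h : HasOrdAt α r k)
    {p : Polynomial ℂ} (hp : p ≠ 0) :
    HasOrdAt α (r * algebraMap (Polynomial ℂ) (RatFunc ℂ) p)
      (k + (p.rootMultiplicity α : ℤ)) := by
  obtain ⟨P, Qp, hP, hQp, hr⟩ := h
  set m := p.rootMultiplicity α with hm
  set u := p /ₘ (Polynomial.X - Polynomial.C α) ^ m with hu
  have hue : Polynomial.eval α u ≠ 0 :=
    Polynomial.eval_divByMonic_pow_rootMultiplicity_ne_zero α hp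
  refine ⟨P * u, Qp, by simp [hP, hue], hQp, ?_⟩
  have hfac : (Polynomial.X - Polynomial.C α) ^ m * u = p :=
    Polynomial.pow_mul_divByMonic_rootMultiplicity_eq p α
  have hp' : algebraMap (Polynomial ℂ) (RatFunc ℂ) p
      = (RatFunc.X - RatFunc.C α) ^ (m : ℤ) * algebraMap (Polynomial ℂ) (RatFunc ℂ) u := by
    rw [← hfac, map_mul, map_pow, XC_eq, zpow_natCast]
  rw [hr, hp', zpow_add₀ (XC_ne α), map_mul]
  ring

theorem column_of_T_is_root_function_of_exact_order
    (n : ℕ) (hn : 1 ≤ n)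
    (Q : Matrix (Fin n) (Fin n) (RatFunc ℂ)) (hQ : Q.det ≠ 0)
    (S T : Matrix (Fin n) (Fin n) (Polynomial ℂ))
    (hS : IsUnit S.det) (hT : IsUnit T.det)
    (D : Matrix (Fin n) (Fin n) (RatFunc ℂ))
    (hD : D = matRF S * Q * matRF T) (hdiag : D.IsDiag)
    (i : Fin n) (α : ℂ) (s : ℕ) (hs : 1 ≤ s)
    (hzero : HasOrdAt α (D i i) (s : ℤ)) :
    evalCol T i α ≠ 0 ∧
    Q.mulVec (colRF T i) = D i i • colRF (S⁻¹) i ∧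
    (∀ k : Fin n, Q.mulVec (colRF T i) k ≠ 0 →
      ∃ m : ℤ, HasOrdAt α (Q.mulVec (colRF T i) k) m ∧ (s : ℤ) ≤ m) ∧
    (∃ k : Fin n, HasOrdAt α (Q.mulVec (colRF T i) k) (s : ℤ)) := by
  -- a column of a matrix with unit determinant does not vanish at α
  have colNE : ∀ (M : Matrix (Fin n) (Fin n) (Polynomial ℂ)), IsUnit M.det →
      ∃ k, Polynomial.eval α (M k i) ≠ 0 := by
    intro M hM
    by_contra hcon
    push_neg at hcon
    have h1 : IsUnit ((M.map (Polynomial.evalRingHom α)).det) := by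
      have hd := (Polynomial.evalRingHom α).map_det M
      rw [RingHom.mapMatrix_apply] at hd
      rw [← hd]; exact hM.map _
    have h2 : (M.map (Polynomial.evalRingHom α)).det = 0 :=
      Matrix.det_eq_zero_of_column_eq_zero i (fun j => hcon j)
    exact h1.ne_zero h2
  -- Part (1)
  have part1 : evalCol T i α ≠ 0 := by
    obtain ⟨k, hk⟩ := colNE T hT
    intro h
    exact hk (congrFun h k)
  -- S⁻¹ has unit determinant
  have hSinvdet : IsUnit (S⁻¹).det := by
    have := Matrix.nonsing_inv_mul S hS
    have hmul : (S⁻¹).det * S.det = 1 := by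
      rw [← Matrix.det_mul, this, Matrix.det_one]
    exact IsUnit.of_mul_eq_one _ hmul
  -- matRF (S⁻¹) * matRF S = 1
  have hSinv : matRF (S⁻¹) * matRF S = 1 := by
    unfold matRF
    rw [← Matrix.map_mul, Matrix.nonsing_inv_mul S hS,
      Matrix.map_one _ (map_zero _) (map_one _)]
  -- Part (2)
  have hQT : Q * matRF T = matRF (S⁻¹) * D := by
    rw [hD, ← Matrix.mul_assoc, ← Matrix.mul_assoc, hSinv, Matrix.one_mul]
  have part2 : Q.mulVec (colRF T i) = D i i • colRF (S⁻¹) i := by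
    funext k
    have lhs : Q.mulVec (colRF T i) k = (Q * matRF T) k i := by
      simp [Matrix.mulVec, Matrix.mul_apply, dotProduct, colRF, matRF, Matrix.map_apply]
    have rhs : (matRF (S⁻¹) * D) k i = D i i * algebraMap (Polynomial ℂ) (RatFunc ℂ) (S⁻¹ k i) := by
      rw [Matrix.mul_apply]
      rw [Finset.sum_eq_single i]
      · rw [mul_comm]; rfl
      · intro j _ hj
        have : D j i = 0 := hdiag hj
        rw [this, mul_zero]
      · intro h; exact absurd (Finset.mem_univ i) h
    rw [lhs, hQT, rhs]
    rfl
  -- entries of the product vector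
  have entry : ∀ k, Q.mulVec (colRF T i) k
      = D i i * algebraMap (Polynomial ℂ) (RatFunc ℂ) (S⁻¹ k i) := by
    intro k
    rw [part2]; rfl
  refine ⟨part1, part2, ?_, ?_⟩
  · -- Part (3)
    intro k hk
    rw [entry k] at hk ⊢
    have hpne : S⁻¹ k i ≠ 0 := by
      intro h
      rw [h, map_zero, mul_zero] at hk
      exact hk rfl
    refine ⟨(s : ℤ) + ((S⁻¹ k i).rootMultiplicity α : ℤ), hzero.mul_poly hpne, le_add_of_nonneg_right (Int.natCast_nonneg _)⟩
  · -- Part (4)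
    obtain ⟨k, hk⟩ := colNE S⁻¹ hSinvdet
    refine ⟨k, ?_⟩
    rw [entry k]
    have hpne : S⁻¹ k i ≠ 0 := fun h => hk (by rw [h]; simp)
    have hmz : (S⁻¹ k i).rootMultiplicity α = 0 :=
      Polynomial.rootMultiplicity_eq_zero hk
    have := hzero.mul_poly hpne
    rwa [hmz, Nat.cast_zero, add_zero] at this
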